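/- arXiv:math-ph/0011033 — 5 statements merged into one kernel-verified Lean document; each statement's English description precedes it below -/
import Mathlib

section
/- Let f ∈ L¹(ℝ) be nonnegative. Then the double integral (1/R) ∫_0^R ∫_R^∞ f(x − y) dy dx tends to 0 as R → ∞. -/
open MeasureTheory Filter
open scoped Pointwise

theorem box_boundary_interaction_tendsto_zero
    (f : ℝ → ℝ) (hf : Integrable f) (hpos : ∀ x, 0 ≤ f x) :
    Tendsto (fun R : ℝ =>
        (1 / R) * ∫ x in Set.Ioc (0 : ℝ) R, ∫ y in Set.Ioi R, f (x - y))
      atTop (nhds 0) := by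
  set g : ℝ → ℝ := fun s => ∫ t in Set.Iio s, f t with hg
  -- g is monotone
  have hgmono : Monotone g := by
    intro s s' hss
    exact setIntegral_mono_set hf.integrableOn
      (Filter.Eventually.of_forall hpos)
      (HasSubset.Subset.eventuallyLE (Set.Iio_subset_Iio hss))
  have hgmeas : Measurable g := hgmono.measurable
  -- bounds on g
  have hg_nonneg : ∀ s, 0 ≤ g s := fun s =>
    setIntegral_nonneg measurableSet_Iio (fun t _ => hpos t)
  have hg_le : ∀ s, g s ≤ ∫ t, f t := fun s =>
    setIntegral_le_integral hf (Filter.Eventually.of_forall hpos)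
  -- g tends to 0 at -∞
  have hg0 : Tendsto g atBot (nhds 0) := by
    have : Tendsto (fun s : ℝ => ∫ t, Set.indicator (Set.Iio s) f t) atBot
        (nhds (∫ t : ℝ, (0 : ℝ))) := by
      apply tendsto_integral_filter_of_dominated_convergence (fun t => |f t|)
      · filter_upwards with s
        exact (hf.aestronglyMeasurable.indicator measurableSet_Iio)
      · filter_upwards with s
        filter_upwards with t
        rw [Real.norm_eq_abs]
        by_cases ht : t ∈ Set.Iio s
        · rw [Set.indicator_of_mem ht]
        · rw [Set.indicator_of_notMem ht]; simp [abs_nonneg]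
      · exact hf.abs
      · filter_upwards with t
        have : ∀ᶠ s in (atBot : Filter ℝ), Set.indicator (Set.Iio s) f t = 0 := by
          filter_upwards [eventually_le_atBot t] with s hs
          exact Set.indicator_of_notMem (by simpa using hs) f
        exact tendsto_const_nhds.congr' (this.mono fun s h => h.symm)
    simpa [integral_indicator measurableSet_Iio] using this
  -- rewrite inner integral
  have hinner : ∀ x R : ℝ, (∫ y in Set.Ioi R, f (x - y)) = g (x - R) := by
    intro x R
    have hemb : MeasurableEmbedding (fun y : ℝ => x - y) := by
      simp only [sub_eq_add_neg]
      exact ((Homeomorph.neg ℝ).trans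
        (Homeomorph.addLeft x)).isClosedEmbedding.measurableEmbedding
    have hmp : MeasurePreserving (fun y : ℝ => x - y) volume volume :=
      Measure.measurePreserving_sub_left volume x
    have hpre : (fun y : ℝ => x - y) ⁻¹' (Set.Iio (x - R)) = Set.Ioi R := by
      ext y; simp [sub_lt_sub_iff_left]
    calc (∫ y in Set.Ioi R, f (x - y))
        = ∫ y in (fun y : ℝ => x - y) ⁻¹' (Set.Iio (x - R)), f (x - y) := by rw [hpre]
      _ = ∫ t in Set.Iio (x - R), f t := hmp.setIntegral_preimage_emb hemb f _
  -- rewrite the outer expression for R > 0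
  have hmain : ∀ R : ℝ, 0 < R →
      (1 / R) * ∫ x in Set.Ioc (0 : ℝ) R, ∫ y in Set.Ioi R, f (x - y)
        = ∫ w in Set.Ioc (0 : ℝ) 1, g (R * w - R) := by
    intro R hR
    have hs : (∫ w in Set.Ioc (0 : ℝ) 1, (fun u => g (u - R)) (R • w))
        = (R ^ Module.finrank ℝ ℝ)⁻¹ • ∫ x in R • Set.Ioc (0 : ℝ) 1, (fun u => g (u - R)) x :=
      Measure.setIntegral_comp_smul_of_pos volume (fun u => g (u - R)) (Set.Ioc (0 : ℝ) 1) hR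
    have hset : R • Set.Ioc (0 : ℝ) 1 = Set.Ioc (0 : ℝ) R := by
      rw [LinearOrderedField.smul_Ioc hR]
      simp
    rw [hset] at hs
    simp only [Module.finrank_self, pow_one, smul_eq_mul] at hs
    have : (∫ x in Set.Ioc (0 : ℝ) R, ∫ y in Set.Ioi R, f (x - y))
        = ∫ x in Set.Ioc (0 : ℝ) R, g (x - R) :=
      setIntegral_congr_fun measurableSet_Ioc (fun x _ => hinner x R)
    rw [this, one_div, ← hs]
  -- conclude by dominated convergence on Ioc 0 1
  have hlim : Tendsto (fun R : ℝ => ∫ w in Set.Ioc (0 : ℝ) 1, g (R * w - R)) atTop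
      (nhds (∫ _ in Set.Ioc (0 : ℝ) 1, (0 : ℝ))) := by
    apply tendsto_integral_filter_of_dominated_convergence (fun _ => ∫ t, f t)
    · filter_upwards with R
      exact ((hgmeas.comp (by fun_prop)).aestronglyMeasurable)
    · filter_upwards with R
      filter_upwards with w
      rw [Real.norm_eq_abs, abs_of_nonneg (hg_nonneg _)]
      exact hg_le _
    · exact integrableOn_const (by simp [Real.volume_Ioc])
    · have hone : (volume.restrict (Set.Ioc (0:ℝ) 1)) {(1:ℝ)} = 0 := by
        rw [Measure.restrict_apply (measurableSet_singleton 1)]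
        exact measure_mono_null (Set.inter_subset_left) (measure_singleton 1)
      filter_upwards [(ae_restrict_iff' measurableSet_Ioc).2
        (Filter.Eventually.of_forall (fun w (hw : w ∈ Set.Ioc (0:ℝ) 1) => hw)),
        compl_mem_ae_iff.2 hone] with w hw hwne
      have hw1 : w < 1 := lt_of_le_of_ne hw.2 (by simpa using hwne)
      have : Tendsto (fun R : ℝ => R * w - R) atTop atBot := by
        have : (fun R : ℝ => R * w - R) = fun R : ℝ => (w - 1) * R := by
          ext R; ring
        rw [this]
        exact tendsto_id.const_mul_atTop_of_neg (by linarith)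
      exact hg0.comp this
  rw [integral_zero] at hlim
  apply Tendsto.congr' _ hlim
  filter_upwards [eventually_gt_atTop (0:ℝ)] with R hR
  exact (hmain R hR).symm
end

section
/- Let B ⊂ ℝ^ν be measurable and t > 0. For x ∉ B with d = dist(x, B) > 0 and any ε > 0, the Gaussian average (4πt)^{−ν/2} ∫_B exp(−‖x−y‖²/(4t)) dy is at most C_ε · exp(−d²/((4+ε)t)), where C_ε depends only on ε and ν (and not on t, x, B). -/
set_option maxHeartbeats 1000000


open MeasureTheory

lemma integrable_rexp_neg_mul_sq_norm_aux (ν : ℕ) {b : ℝ} (hb : 0 < b) :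
    Integrable (fun v : EuclideanSpace ℝ (Fin ν) => Real.exp (-b * ‖v‖ ^ 2)) := by
  have h := GaussianFourier.integrable_cexp_neg_mul_sq_norm_add
    (V := EuclideanSpace ℝ (Fin ν)) (b := (b : ℂ)) (by simpa using hb) 0 0
  have h2 := h.re
  refine h2.congr (Filter.Eventually.of_forall fun v => ?_)
  simp [← Complex.ofReal_pow, ← Complex.ofReal_mul, ← Complex.ofReal_neg,
    Complex.exp_ofReal_re]

theorem gaussian_average_hitting_bound (ν : ℕ) (ε : ℝ) (hε : 0 < ε) :
    ∃ C > (0 : ℝ), ∀ (t : ℝ), 0 < t →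
      ∀ (B : Set (EuclideanSpace ℝ (Fin ν))) (x : EuclideanSpace ℝ (Fin ν)),
        MeasurableSet B → x ∉ B → 0 < Metric.infDist x B →
        (4 * Real.pi * t) ^ (-(ν : ℝ) / 2) *
            (∫ y in B, Real.exp (-‖x - y‖ ^ 2 / (4 * t)))
          ≤ C * Real.exp (-(Metric.infDist x B) ^ 2 / ((4 + ε) * t)) := by
  have h4ε : (0:ℝ) < 4 + ε := by linarith
  set δ : ℝ := ε / (4 * (4 + ε)) with hδdef
  have hδ : 0 < δ := by positivity
  refine ⟨((4 + ε) / ε) ^ ((ν : ℝ) / 2), by positivity, ?_⟩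
  intro t ht B x hB hxB hd
  set d := Metric.infDist x B with hd_def
  have hπ := Real.pi_pos
  -- key splitting : 1/(4t) = 1/((4+ε)t) + δ/t
  have hsplit : ∀ y : EuclideanSpace ℝ (Fin ν), y ∈ B →
      Real.exp (-‖x - y‖ ^ 2 / (4 * t)) ≤
        Real.exp (-d ^ 2 / ((4 + ε) * t)) * Real.exp (-(δ / t) * ‖x - y‖ ^ 2) := by
    intro y hy
    rw [← Real.exp_add, Real.exp_le_exp]
    have hdy : d ≤ ‖x - y‖ := by
      rw [← dist_eq_norm]
      exact Metric.infDist_le_dist_of_mem hy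
    have hd0 : 0 ≤ d := le_of_lt hd
    have hsq : d ^ 2 ≤ ‖x - y‖ ^ 2 := by nlinarith
    have heq : -‖x - y‖ ^ 2 / (4 * t) =
        -‖x - y‖ ^ 2 / ((4 + ε) * t) + -(δ / t) * ‖x - y‖ ^ 2 := by
      field_simp [hδdef]
      rw [hδdef]; field_simp; ring
    rw [heq]
    have hc : (0:ℝ) < (4 + ε) * t := by positivity
    have h2 : -‖x - y‖ ^ 2 / ((4 + ε) * t) ≤ -d ^ 2 / ((4 + ε) * t) := by
      rw [div_le_div_iff₀ hc hc]; nlinarith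
    linarith
  -- the Gaussian integral
  have hint : Integrable (fun y : EuclideanSpace ℝ (Fin ν) =>
      Real.exp (-(δ / t) * ‖x - y‖ ^ 2)) := by
    have := (integrable_rexp_neg_mul_sq_norm_aux ν (b := δ / t) (by positivity)).comp_sub_left x
    simpa using this
  have hval : (∫ y : EuclideanSpace ℝ (Fin ν), Real.exp (-(δ / t) * ‖x - y‖ ^ 2))
      = (Real.pi / (δ / t)) ^ ((ν : ℝ) / 2) := by
    have hshift : (∫ y : EuclideanSpace ℝ (Fin ν), Real.exp (-(δ / t) * ‖x - y‖ ^ 2))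
        = ∫ y : EuclideanSpace ℝ (Fin ν), Real.exp (-(δ / t) * ‖y‖ ^ 2) := by
      exact integral_sub_left_eq_self (G := EuclideanSpace ℝ (Fin ν)) (μ := volume)
        (fun z => Real.exp (-(δ / t) * ‖z‖ ^ 2)) x
    rw [hshift,
      GaussianFourier.integral_rexp_neg_mul_sq_norm (by positivity : (0:ℝ) < δ / t)]
    simp [finrank_euclideanSpace_fin]
  -- bound the set integral
  have hIB : (∫ y in B, Real.exp (-‖x - y‖ ^ 2 / (4 * t)))
      ≤ Real.exp (-d ^ 2 / ((4 + ε) * t)) * (Real.pi / (δ / t)) ^ ((ν : ℝ) / 2) := by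
    rw [← hval, ← integral_const_mul]
    have hg : Integrable (fun y : EuclideanSpace ℝ (Fin ν) =>
        Real.exp (-d ^ 2 / ((4 + ε) * t)) * Real.exp (-(δ / t) * ‖x - y‖ ^ 2)) :=
      hint.const_mul _
    have hf : IntegrableOn (fun y : EuclideanSpace ℝ (Fin ν) =>
        Real.exp (-‖x - y‖ ^ 2 / (4 * t))) B := by
      refine Integrable.mono (hg.restrict (s := B)) ?_ ?_
      · apply Measurable.aestronglyMeasurable
        fun_prop
      · refine (ae_restrict_iff' hB).2 (Filter.Eventually.of_forall fun y hy => ?_)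
        rw [Real.norm_eq_abs, Real.norm_eq_abs, abs_of_pos (Real.exp_pos _),
          abs_of_pos (by positivity)]
        exact hsplit y hy
    calc (∫ y in B, Real.exp (-‖x - y‖ ^ 2 / (4 * t)))
        ≤ ∫ y in B, Real.exp (-d ^ 2 / ((4 + ε) * t)) * Real.exp (-(δ / t) * ‖x - y‖ ^ 2) := by
          exact setIntegral_mono_on hf (hg.restrict) hB hsplit
      _ ≤ ∫ y, Real.exp (-d ^ 2 / ((4 + ε) * t)) * Real.exp (-(δ / t) * ‖x - y‖ ^ 2) :=
          setIntegral_le_integral hg (Filter.Eventually.of_forall fun y => by positivity)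
  have h1 : (4 * Real.pi * t) ^ (-(ν : ℝ) / 2) *
        (∫ y in B, Real.exp (-‖x - y‖ ^ 2 / (4 * t)))
      ≤ (4 * Real.pi * t) ^ (-(ν : ℝ) / 2) *
        (Real.exp (-d ^ 2 / ((4 + ε) * t)) * (Real.pi / (δ / t)) ^ ((ν : ℝ) / 2)) := by
    exact mul_le_mul_of_nonneg_left hIB (by positivity)
  refine h1.trans (le_of_eq ?_)
  have hc : (4 * Real.pi * t) ^ (-(ν : ℝ) / 2) * (Real.pi / (δ / t)) ^ ((ν : ℝ) / 2)
      = ((4 + ε) / ε) ^ ((ν : ℝ) / 2) := by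
    rw [neg_div, Real.rpow_neg (by positivity), inv_mul_eq_div,
      ← Real.div_rpow (by positivity) (by positivity)]
    congr 1
    field_simp [hδdef]
    rw [hδdef]; field_simp
  rw [← hc]
  ring
end

section
/- Let A : C_b(ℝ^ν) → L²(ℝ^ν) and B : L²(ℝ^ν) → C_b(ℝ^ν) be bounded linear operators, and assume A preserves positivity (f ≥ 0 pointwise implies A f ≥ 0 a.e.). Then the composition A∘B : L²(ℝ^ν) → L²(ℝ^ν) is a Hilbert–Schmidt operator and ‖A∘B‖_{HS} ≤ ‖A‖_{C_b → L²} · ‖B‖_{L² → C_b}. -/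
set_option maxHeartbeats 1000000
open MeasureTheory

section Aux

variable {ν : ℕ}

local notation "𝓔" => EuclideanSpace ℝ (Fin ν)
local notation "Cb" => BoundedContinuousFunction (EuclideanSpace ℝ (Fin ν)) ℝ
local notation "H" => Lp ℝ 2 (volume : Measure (EuclideanSpace ℝ (Fin ν)))

/-- coeFn of a finite sum in Lp. -/
lemma aux_Lp_coeFn_sum {α : Type*} [MeasurableSpace α] {μ : Measure α} {κ : Type*}
    (s : Finset κ) (f : κ → Lp ℝ 2 μ) :
    ⇑(∑ i ∈ s, f i) =ᵐ[μ] fun y => ∑ i ∈ s, f i y := by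
  induction s using Finset.cons_induction with
  | empty =>
      filter_upwards [Lp.coeFn_zero ℝ 2 μ] with y hy
      simpa using hy
  | cons i s hi ih =>
      rw [Finset.sum_cons]
      filter_upwards [Lp.coeFn_add (f i) (∑ j ∈ s, f j), ih] with y h1 h2
      simp only [Finset.sum_cons, h1, Pi.add_apply, h2]

lemma aux_mono
    (A : Cb →L[ℝ] H)
    (hApos : ∀ f : Cb, (∀ x, 0 ≤ f x) → 0 ≤ᵐ[volume] (A f : 𝓔 → ℝ))
    (p q : Cb) (hpq : ∀ x, p x ≤ q x) :
    ∀ᵐ y ∂(volume : Measure 𝓔), (A p : 𝓔 → ℝ) y ≤ (A q : 𝓔 → ℝ) y := by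
  have h0 := hApos (q - p) (fun x => by
    have := hpq x
    simp only [BoundedContinuousFunction.coe_sub, Pi.sub_apply]
    linarith)
  have he : A (q - p) = A q - A p := by rw [map_sub]
  rw [he] at h0
  filter_upwards [h0, Lp.coeFn_sub (A q) (A p)] with y h1 h2
  have : (0 : ℝ) ≤ (⇑(A q) - ⇑(A p)) y := h2 ▸ h1
  simpa [Pi.sub_apply] using this

lemma aux_key
    (A : Cb →L[ℝ] H) (B : H →L[ℝ] Cb)
    (hApos : ∀ f : Cb, (∀ x, 0 ≤ f x) → 0 ≤ᵐ[volume] (A f : 𝓔 → ℝ))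
    (ι : Type) (b : HilbertBasis ι ℝ H) (s : Finset ι) :
    ∑ i ∈ s, ‖A (B (b i))‖ ^ 2 ≤ (‖A‖ * ‖B‖) ^ 2 := by
  classical
  set F : ι → Cb := fun i => B (b i) with hF
  -- Bessel-type bound: for each x, ∑ i in s, (F i x)^2 ≤ ‖B‖^2
  have hBessel : ∀ x : 𝓔, ∑ i ∈ s, (F i x) ^ 2 ≤ ‖B‖ ^ 2 := by
    intro x
    set φ : H →L[ℝ] ℝ := (BoundedContinuousFunction.evalCLM ℝ x).comp B with hφdef
    have hφ : ‖φ‖ ≤ ‖B‖ := by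
      refine ContinuousLinearMap.opNorm_le_bound _ (norm_nonneg B) fun u => ?_
      have h1 : ‖φ u‖ = ‖B u x‖ := rfl
      rw [h1]
      exact le_trans ((B u).norm_coe_le_norm x) (B.le_opNorm u)
    set u : H := (InnerProductSpace.toDual ℝ H).symm φ with hu
    have hval : ∀ v : H, @inner ℝ _ _ u v = φ v := fun v =>
      InnerProductSpace.toDual_symm_apply
    have hnorm : ‖u‖ = ‖φ‖ := LinearIsometryEquiv.norm_map _ _
    have hb := (b.orthonormal).sum_inner_products_le (s := s) u
    have heq : ∀ i, ‖@inner ℝ _ _ (b i) u‖ ^ 2 = (F i x) ^ 2 := by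
      intro i
      rw [real_inner_comm, hval]
      have : φ (b i) = F i x := rfl
      rw [this, Real.norm_eq_abs, sq_abs]
    calc ∑ i ∈ s, (F i x) ^ 2 = ∑ i ∈ s, ‖@inner ℝ _ _ (b i) u‖ ^ 2 := by
          refine Finset.sum_congr rfl fun i _ => (heq i).symm
      _ ≤ ‖u‖ ^ 2 := hb
      _ ≤ ‖B‖ ^ 2 := by
          rw [hnorm]
          exact pow_le_pow_left₀ (norm_nonneg φ) hφ 2
  -- the dominating function g
  have hgcont : Continuous fun x : 𝓔 => Real.sqrt (∑ i ∈ s, (F i x) ^ 2) :=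
    Real.continuous_sqrt.comp (continuous_finset_sum s fun i _ => ((F i).continuous.pow 2))
  set g : Cb := BoundedContinuousFunction.ofNormedAddCommGroup _ hgcont ‖B‖ (fun x => by
      rw [Real.norm_eq_abs, abs_of_nonneg (Real.sqrt_nonneg _)]
      calc Real.sqrt (∑ i ∈ s, (F i x) ^ 2) ≤ Real.sqrt (‖B‖ ^ 2) :=
            Real.sqrt_le_sqrt (hBessel x)
        _ = ‖B‖ := Real.sqrt_sq (norm_nonneg B)) with hg
  have hgapp : ∀ x, g x = Real.sqrt (∑ i ∈ s, (F i x) ^ 2) := fun x => rfl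
  have hg_nonneg : ∀ x, 0 ≤ g x := fun x => Real.sqrt_nonneg _
  have hg_sq : ∀ x, (g x) ^ 2 = ∑ i ∈ s, (F i x) ^ 2 := fun x =>
    Real.sq_sqrt (Finset.sum_nonneg fun i _ => sq_nonneg _)
  have hg_norm : ‖g‖ ≤ ‖B‖ := by
    refine BoundedContinuousFunction.norm_le (norm_nonneg B) |>.2 fun x => ?_
    rw [Real.norm_eq_abs, abs_of_nonneg (hg_nonneg x), hgapp]
    calc Real.sqrt (∑ i ∈ s, (F i x) ^ 2) ≤ Real.sqrt (‖B‖ ^ 2) :=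
          Real.sqrt_le_sqrt (hBessel x)
      _ = ‖B‖ := Real.sqrt_sq (norm_nonneg B)
  -- pointwise Cauchy-Schwarz
  have hCS : ∀ (ω : EuclideanSpace ℝ ↥s) (x : 𝓔),
      ∑ i : ↥s, ω i * F i x ≤ ‖ω‖ * g x := by
    intro ω x
    have h1 := Finset.sum_mul_sq_le_sq_mul_sq Finset.univ (fun i : ↥s => ω i) (fun i : ↥s => F i x)
    have hω : ∑ i : ↥s, (ω i) ^ 2 = ‖ω‖ ^ 2 := by
      rw [← real_inner_self_eq_norm_sq, PiLp.inner_apply]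
      simp [RCLike.inner_apply, conj_trivial, sq]
    have hgx : ∑ i : ↥s, (F i x) ^ 2 = (g x) ^ 2 := by
      rw [hg_sq]
      exact Finset.sum_coe_sort s (fun i => (F i x) ^ 2)
    have hb : (0 : ℝ) ≤ ‖ω‖ * g x := mul_nonneg (norm_nonneg _) (hg_nonneg x)
    have h2 : (∑ i : ↥s, ω i * F i x) ^ 2 ≤ (‖ω‖ * g x) ^ 2 := by
      calc (∑ i : ↥s, ω i * F i x) ^ 2
          ≤ (∑ i : ↥s, (ω i) ^ 2) * ∑ i : ↥s, (F i x) ^ 2 := h1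
        _ = (‖ω‖ * g x) ^ 2 := by rw [hω, hgx]; ring
    calc ∑ i : ↥s, ω i * F i x ≤ |∑ i : ↥s, ω i * F i x| := le_abs_self _
      _ = Real.sqrt ((∑ i : ↥s, ω i * F i x) ^ 2) := (Real.sqrt_sq_eq_abs _).symm
      _ ≤ Real.sqrt ((‖ω‖ * g x) ^ 2) := Real.sqrt_le_sqrt h2
      _ = ‖ω‖ * g x := Real.sqrt_sq hb
  -- a.e. bound for each fixed ω
  have hAE : ∀ ω : EuclideanSpace ℝ ↥s, ∀ᵐ y ∂(volume : Measure 𝓔),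
      ∑ i : ↥s, ω i * (A (F i) : 𝓔 → ℝ) y ≤ ‖ω‖ * (A g : 𝓔 → ℝ) y := by
    intro ω
    have hpt : ∀ x, (∑ i : ↥s, ω i • F ↑i) x ≤ (‖ω‖ • g) x := by
      intro x
      have e : (∑ i : ↥s, ω i • F ↑i) x = ∑ i : ↥s, ω i * F i x := by
        rw [BoundedContinuousFunction.sum_apply]
        exact Finset.sum_congr rfl fun i _ => rfl
      rw [e]
      exact hCS ω x
    have h1 := aux_mono A hApos _ _ hpt
    have e1 : A (∑ i : ↥s, ω i • F ↑i) = ∑ i : ↥s, ω i • A (F ↑i) := by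
      rw [map_sum]
      exact Finset.sum_congr rfl fun i _ => A.map_smul _ _
    have e2 : A (‖ω‖ • g) = ‖ω‖ • A g := A.map_smul _ _
    rw [e1, e2] at h1
    have hc1 := aux_Lp_coeFn_sum (Finset.univ : Finset ↥s) (fun i => ω i • A (F ↑i))
    have hc2 : ∀ᵐ y ∂(volume : Measure 𝓔), ∀ i : ↥s,
        (ω i • A (F ↑i) : H) y = ω i * (A (F ↑i) : 𝓔 → ℝ) y := by
      rw [Filter.eventually_all]
      intro i
      filter_upwards [Lp.coeFn_smul (ω i) (A (F ↑i))] with y h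
      rw [h, Pi.smul_apply, smul_eq_mul]
    have hc3 := Lp.coeFn_smul ‖ω‖ (A g)
    filter_upwards [h1, hc1, hc2, hc3] with y hy1 hy2 hy3 hy4
    calc ∑ i : ↥s, ω i * (A (F i) : 𝓔 → ℝ) y
        = ∑ i : ↥s, (ω i • A (F ↑i) : H) y := by
          exact Finset.sum_congr rfl fun i _ => (hy3 i).symm
      _ = (∑ i : ↥s, ω i • A (F ↑i) : H) y := hy2.symm
      _ ≤ (‖ω‖ • A g : H) y := hy1
      _ = ‖ω‖ * (A g : 𝓔 → ℝ) y := by rw [hy4, Pi.smul_apply, smul_eq_mul]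
  -- combine over a countable dense set
  obtain ⟨D, hDc, hDd⟩ := TopologicalSpace.exists_countable_dense (EuclideanSpace ℝ ↥s)
  have hAED : ∀ᵐ y ∂(volume : Measure 𝓔), ∀ ω ∈ D,
      ∑ i : ↥s, ω i * (A (F i) : 𝓔 → ℝ) y ≤ ‖ω‖ * (A g : 𝓔 → ℝ) y :=
    (ae_ball_iff hDc).2 fun ω _ => hAE ω
  have hAg0 := hApos g hg_nonneg
  have hptwise : ∀ᵐ y ∂(volume : Measure 𝓔),
      ∑ i ∈ s, ((A (F i) : 𝓔 → ℝ) y) ^ 2 ≤ ((A g : 𝓔 → ℝ) y) ^ 2 := by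
    filter_upwards [hAED, hAg0] with y hy hy0
    set c : ℝ := (A g : 𝓔 → ℝ) y with hc
    set v : EuclideanSpace ℝ ↥s := WithLp.toLp 2 (fun i : ↥s => (A (F ↑i) : 𝓔 → ℝ) y) with hv
    have hinner : ∀ ω : EuclideanSpace ℝ ↥s, @inner ℝ _ _ ω v = ∑ i : ↥s, ω i * v i := by
      intro ω
      simp [PiLp.inner_apply, RCLike.inner_apply, conj_trivial, mul_comm]
    have hall : ∀ ω : EuclideanSpace ℝ ↥s, @inner ℝ _ _ ω v ≤ ‖ω‖ * c := by
      have hcl : IsClosed {ω : EuclideanSpace ℝ ↥s | @inner ℝ _ _ ω v ≤ ‖ω‖ * c} :=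
        isClosed_le (Continuous.inner continuous_id continuous_const)
          (continuous_norm.mul continuous_const)
      have hsub : D ⊆ {ω : EuclideanSpace ℝ ↥s | @inner ℝ _ _ ω v ≤ ‖ω‖ * c} := by
        intro ω hω
        simpa [hinner ω] using hy ω hω
      have h2 := hcl.closure_subset_iff.2 hsub
      rw [hDd.closure_eq] at h2
      exact fun ω => h2 (Set.mem_univ ω)
    have hvv := hall v
    rw [real_inner_self_eq_norm_sq] at hvv
    have h3 : ∑ i : ↥s, (v i) ^ 2 = ‖v‖ ^ 2 := by
      rw [← real_inner_self_eq_norm_sq, hinner]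
      exact Finset.sum_congr rfl fun i _ => sq (v i) ▸ rfl
    have h4 : ∑ i ∈ s, ((A (F i) : 𝓔 → ℝ) y) ^ 2 = ∑ i : ↥s, (v i) ^ 2 :=
      (Finset.sum_coe_sort s (fun i => ((A (F i) : 𝓔 → ℝ) y) ^ 2)).symm
    rw [h4, h3]
    nlinarith [norm_nonneg v, sq_nonneg (‖v‖ - c)]
  -- integrate
  have hnormsq : ∀ h : H, ‖h‖ ^ 2 = ∫ y, ((h : 𝓔 → ℝ) y) ^ 2 ∂volume := by
    intro h
    rw [← real_inner_self_eq_norm_sq, L2.inner_def]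
    simp_rw [RCLike.inner_apply, conj_trivial, ← sq]
  have hInt : ∀ h : H, Integrable (fun y => ((h : 𝓔 → ℝ) y) ^ 2) volume := by
    intro h
    have := L2.integrable_inner (𝕜 := ℝ) h h
    simp only [RCLike.inner_apply, conj_trivial] at this
    simpa [sq] using this
  calc ∑ i ∈ s, ‖A (B (b i))‖ ^ 2
      = ∑ i ∈ s, ∫ y, ((A (F i) : 𝓔 → ℝ) y) ^ 2 ∂volume :=
        Finset.sum_congr rfl fun i _ => hnormsq (A (F i))
    _ = ∫ y, ∑ i ∈ s, ((A (F i) : 𝓔 → ℝ) y) ^ 2 ∂volume :=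
        (integral_finset_sum s fun i _ => hInt (A (F i))).symm
    _ ≤ ∫ y, ((A g : 𝓔 → ℝ) y) ^ 2 ∂volume :=
        integral_mono_ae (integrable_finset_sum s fun i _ => hInt (A (F i)))
          (hInt (A g)) hptwise
    _ = ‖A g‖ ^ 2 := (hnormsq (A g)).symm
    _ ≤ (‖A‖ * ‖g‖) ^ 2 := pow_le_pow_left₀ (norm_nonneg _) (A.le_opNorm g) 2
    _ ≤ (‖A‖ * ‖B‖) ^ 2 :=
        pow_le_pow_left₀ (mul_nonneg (norm_nonneg A) (norm_nonneg g))
          (mul_le_mul_of_nonneg_left hg_norm (norm_nonneg A)) 2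

end Aux

/-- Little Grothendieck theorem, Hilbert–Schmidt case: if `A : C_b(ℝ^ν) → L²`
is bounded and positivity preserving and `B : L² → C_b(ℝ^ν)` is bounded, then
`A ∘ B` is Hilbert–Schmidt (its squared norms over any Hilbert basis are summable)
with Hilbert–Schmidt norm at most `‖A‖ ‖B‖`. -/
theorem composition_hilbertSchmidt
    (ν : ℕ)
    (A : BoundedContinuousFunction (EuclideanSpace ℝ (Fin ν)) ℝ →L[ℝ]
          Lp ℝ 2 (volume : Measure (EuclideanSpace ℝ (Fin ν))))
    (B : Lp ℝ 2 (volume : Measure (EuclideanSpace ℝ (Fin ν))) →L[ℝ]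
          BoundedContinuousFunction (EuclideanSpace ℝ (Fin ν)) ℝ)
    (hApos : ∀ f : BoundedContinuousFunction (EuclideanSpace ℝ (Fin ν)) ℝ,
      (∀ x, 0 ≤ f x) → 0 ≤ᵐ[volume] (A f : EuclideanSpace ℝ (Fin ν) → ℝ)) :
    ∀ (ι : Type) (b : HilbertBasis ι ℝ
        (Lp ℝ 2 (volume : Measure (EuclideanSpace ℝ (Fin ν))))),
      Summable (fun i => ‖(A.comp B) (b i)‖ ^ 2) ∧
      Real.sqrt (∑' i, ‖(A.comp B) (b i)‖ ^ 2) ≤ ‖A‖ * ‖B‖ := by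
  intro ι b
  have key : ∀ s : Finset ι, ∑ i ∈ s, ‖(A.comp B) (b i)‖ ^ 2 ≤ (‖A‖ * ‖B‖) ^ 2 := by
    intro s
    simpa using aux_key A B hApos ι b s
  have hsum : Summable (fun i => ‖(A.comp B) (b i)‖ ^ 2) :=
    summable_of_sum_le (fun i => sq_nonneg _) key
  refine ⟨hsum, ?_⟩
  have htsum : ∑' i, ‖(A.comp B) (b i)‖ ^ 2 ≤ (‖A‖ * ‖B‖) ^ 2 :=
    Summable.tsum_le_of_sum_le hsum key
  calc Real.sqrt (∑' i, ‖(A.comp B) (b i)‖ ^ 2)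
      ≤ Real.sqrt ((‖A‖ * ‖B‖) ^ 2) := Real.sqrt_le_sqrt htsum
    _ = ‖A‖ * ‖B‖ := Real.sqrt_sq (mul_nonneg (norm_nonneg A) (norm_nonneg B))
end

section
/- Let A : L¹(ℝ^ν) → L²(ℝ^ν) and B : L²(ℝ^ν) → L¹(ℝ^ν) be bounded linear operators, B preserving positivity, and suppose there exists φ ∈ L¹(ℝ^ν) such that |(B f)(x)| ≤ φ(x) a.e. for every f ∈ L² with ‖f‖_{L²} ≤ 1. Then A∘B is trace class on L²(ℝ^ν) and ‖A∘B‖_{tr} ≤ ‖A‖_{L¹→L²} · ‖φ‖_{L¹}. -/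
open MeasureTheory


lemma lp_coeFn_finset_sum {α F : Type*} [MeasurableSpace α] {μ : Measure α}
    [NormedAddCommGroup F] {p : ENNReal} {ι : Type*} (s : Finset ι) (g : ι → Lp F p μ) :
    (↑(∑ i ∈ s, g i) : α → F) =ᵐ[μ] fun x => ∑ i ∈ s, (g i : α → F) x := by
  classical
  induction s using Finset.induction_on with
  | empty => simp only [Finset.sum_empty]; exact Lp.coeFn_zero F p μ
  | insert a s hni ih =>
    filter_upwards [Lp.coeFn_add (g a) (∑ i ∈ s, g i), ih] with x h1 h2
    rw [Finset.sum_insert hni, h1, Pi.add_apply, h2, Finset.sum_insert hni]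

noncomputable def ratVec {κ : Type*} [Fintype κ] (q : κ → ℚ) : EuclideanSpace ℝ κ :=
  (WithLp.equiv 2 (κ → ℝ)).symm (fun i => (q i : ℝ))

lemma ratVec_apply {κ : Type*} [Fintype κ] (q : κ → ℚ) (i : κ) :
    ratVec q i = (q i : ℝ) := rfl

lemma rat_approx {κ : Type*} [Fintype κ] (z : EuclideanSpace ℝ κ) {ε : ℝ} (hε : 0 < ε) :
    ∃ q : κ → ℚ, ‖ratVec q - z‖ < ε := by
  set n := Fintype.card κ with hn
  have hδ : 0 < ε / (2 * (n + 1)) := by positivity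
  have h : ∀ i : κ, ∃ q : ℚ, |(q : ℝ) - z i| < ε / (2 * (n + 1)) := fun i => by
    obtain ⟨q, hq⟩ := exists_rat_near (z i) hδ
    exact ⟨q, by rw [abs_sub_comm]; exact hq⟩
  choose q hq using h
  refine ⟨q, ?_⟩
  have hle : ‖ratVec q - z‖ ≤ Real.sqrt (n * (ε / (2 * (n + 1))) ^ 2) := by
    rw [EuclideanSpace.norm_eq]
    apply Real.sqrt_le_sqrt
    have hb : ∀ i : κ, ‖(ratVec q - z) i‖ ^ 2 ≤ (ε / (2 * (n + 1))) ^ 2 := by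
      intro i
      have hzi : (ratVec q - z) i = (q i : ℝ) - z i := rfl
      rw [hzi, Real.norm_eq_abs]
      have := (hq i).le
      nlinarith [abs_nonneg ((q i : ℝ) - z i), sq_abs ((q i : ℝ) - z i)]
    calc ∑ i, ‖(ratVec q - z) i‖ ^ 2
        ≤ ∑ _i : κ, (ε / (2 * (n + 1))) ^ 2 := Finset.sum_le_sum fun i _ => hb i
      _ = n * (ε / (2 * (n + 1))) ^ 2 := by simp [hn, mul_comm]
  refine lt_of_le_of_lt hle ?_
  have h1 : (n : ℝ) * (ε / (2 * (n + 1))) ^ 2 < ε ^ 2 := by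
    have hn0 : (0:ℝ) ≤ n := Nat.cast_nonneg n
    rw [div_pow, mul_comm, div_mul_eq_mul_div, div_lt_iff₀ (by positivity)]
    nlinarith [sq_nonneg ε, sq_nonneg ((n:ℝ))]
  calc Real.sqrt ((n:ℝ) * (ε / (2 * (n + 1))) ^ 2) < Real.sqrt (ε ^ 2) :=
        Real.sqrt_lt_sqrt (by positivity) h1
    _ = ε := Real.sqrt_sq hε.le

lemma norm_le_of_forall_rat {κ : Type*} [Fintype κ] (z : EuclideanSpace ℝ κ) (b : ℝ)
    (h : ∀ q : κ → ℚ, ‖ratVec q‖ ≤ 1 → (inner ℝ (ratVec q) z : ℝ) ≤ b) : ‖z‖ ≤ b := by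
  have h0 : ratVec (0 : κ → ℚ) = 0 := by
    ext i
    simp [ratVec_apply]
  have hb : 0 ≤ b := by
    have := h 0 (by rw [h0]; simp)
    rw [h0] at this
    simpa using this
  by_contra hlt
  push_neg at hlt
  set r := ‖z‖ with hr
  have hr0 : 0 < r := lt_of_le_of_lt hb hlt
  set ε := (r - b) / (3 * r) with hε
  have hε0 : 0 < ε := by
    apply div_pos (by linarith) (by linarith)
  have hε1 : ε < 1 := by
    rw [hε, div_lt_one (by linarith)]
    linarith
  set c : EuclideanSpace ℝ κ := ((1 - ε) / r) • z with hc
  have hcnorm : ‖c‖ = 1 - ε := by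
    rw [hc, norm_smul, Real.norm_eq_abs, abs_of_nonneg (div_nonneg (by linarith) hr0.le), ← hr]
    field_simp
  obtain ⟨q, hq⟩ := rat_approx c hε0
  have hqnorm : ‖ratVec q‖ ≤ 1 := by
    calc ‖ratVec q‖ = ‖ratVec q - c + c‖ := by rw [sub_add_cancel]
      _ ≤ ‖ratVec q - c‖ + ‖c‖ := norm_add_le _ _
      _ ≤ ε + (1 - ε) := by rw [hcnorm]; linarith [hq.le]
      _ = 1 := by ring
  have hinner : (inner ℝ (ratVec q) z : ℝ) ≥ (1 - ε) * r - ε * r := by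
    have h1 : (inner ℝ c z : ℝ) = (1 - ε) * r := by
      rw [hc, real_inner_smul_left, real_inner_self_eq_norm_sq, ← hr]
      field_simp
    have h2 : (inner ℝ (ratVec q - c) z : ℝ) ≥ -(ε * r) := by
      have := abs_real_inner_le_norm (ratVec q - c) z
      have hle : ‖ratVec q - c‖ * ‖z‖ ≤ ε * r :=
        mul_le_mul hq.le le_rfl (norm_nonneg _) hε0.le
      have habs : |(inner ℝ (ratVec q - c) z : ℝ)| ≤ ε * r := le_trans this (by rw [← hr] at hle ⊢; exact hle)
      linarith [neg_abs_le (inner ℝ (ratVec q - c) z : ℝ)]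
    have hsum : (inner ℝ (ratVec q) z : ℝ) = (inner ℝ c z : ℝ) + (inner ℝ (ratVec q - c) z : ℝ) := by
      rw [← inner_add_left]
      congr 1
      abel
    rw [hsum, h1]
    linarith
  have := h q hqnorm
  have hεr : ε * r = (r - b) / 3 := by
    rw [hε]
    field_simp
  nlinarith


lemma key_ineq {α : Type*} [MeasurableSpace α] {μ : Measure α}
    {H : Type*} [NormedAddCommGroup H] [InnerProductSpace ℝ H]
    {κ : Type*} [Fintype κ]
    (A : Lp ℝ 1 μ →L[ℝ] H) (g : κ → H)
    (hg : ∀ c : EuclideanSpace ℝ κ, ‖∑ i, c i • g i‖ ≤ ‖c‖)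
    (v : α → EuclideanSpace ℝ κ) (hv : Integrable v μ)
    (w : κ → Lp ℝ 1 μ) (hw : ∀ i, (w i : α → ℝ) =ᵐ[μ] fun x => v x i) :
    ∑ i, (inner ℝ (g i) (A (w i)) : ℝ) ≤ ‖A‖ * ∫ x, ‖v x‖ ∂μ := by
  classical
  set Ψ : Lp (EuclideanSpace ℝ κ) 1 μ → ℝ :=
    fun G => ∑ i, (inner ℝ (g i) (A ((EuclideanSpace.proj (𝕜 := ℝ) i).compLpL 1 μ G)) : ℝ) with hΨ
  have hΨcont : Continuous Ψ := by
    apply continuous_finset_sum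
    intro i _
    exact Continuous.inner continuous_const
      (A.continuous.comp ((EuclideanSpace.proj (𝕜 := ℝ) i).compLpL 1 μ).continuous)
  have hP : ∀ ⦃u : α → EuclideanSpace ℝ κ⦄, Integrable u μ →
      ∀ (hu : MemLp u 1 μ), Ψ (hu.toLp u) ≤ ‖A‖ * ∫ x, ‖u x‖ ∂μ := by
    apply Integrable.induction
    · -- indicator case
      intro c s hs hμs hu
      set χℝ : α → ℝ := s.indicator fun _ => (1:ℝ) with hχℝ
      have hχm : MemLp χℝ 1 μ := memLp_indicator_const 1 hs 1 (Or.inr hμs.ne)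
      set χ : Lp ℝ 1 μ := hχm.toLp χℝ with hχ
      have hcomp : ∀ i, (EuclideanSpace.proj (𝕜 := ℝ) i).compLpL 1 μ
          (hu.toLp (s.indicator fun _ => c)) = (c i) • χ := by
        intro i
        apply Lp.ext
        filter_upwards [ContinuousLinearMap.coeFn_compLpL (EuclideanSpace.proj (𝕜 := ℝ) i)
            (hu.toLp (s.indicator fun _ => c)), hu.coeFn_toLp, Lp.coeFn_smul (c i) χ,
            hχm.coeFn_toLp] with x h1 h2 h3 h4
        rw [h1, h2, h3, Pi.smul_apply, h4]
        by_cases hx : x ∈ s <;>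
          simp [hχℝ, Set.indicator_of_mem, Set.indicator_of_notMem, hx]
      have hΨval : Ψ (hu.toLp (s.indicator fun _ => c)) = (inner ℝ (∑ i, c i • g i) (A χ) : ℝ) := by
        rw [hΨ]
        simp only [hcomp]
        rw [sum_inner]
        refine Finset.sum_congr rfl fun i _ => ?_
        rw [A.map_smul, real_inner_smul_right, real_inner_smul_left]
      have hχnorm : ‖χ‖ = (μ s).toReal := by
        rw [L1.norm_eq_integral_norm]
        have : ∫ x, ‖(χ : α → ℝ) x‖ ∂μ = ∫ x, s.indicator (fun _ => (1:ℝ)) x ∂μ := by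
          apply integral_congr_ae
          filter_upwards [hχm.coeFn_toLp] with x h
          rw [h, hχℝ]
          by_cases hx : x ∈ s <;>
            simp [Set.indicator_of_mem, Set.indicator_of_notMem, hx]
        rw [this, integral_indicator_const (1:ℝ) hs, smul_eq_mul, mul_one, measureReal_def]
      have hrhs : ∫ x, ‖s.indicator (fun _ => c) x‖ ∂μ = (μ s).toReal * ‖c‖ := by
        have : (fun x => ‖s.indicator (fun _ => c) x‖) = s.indicator fun _ => ‖c‖ := by
          funext x
          by_cases hx : x ∈ s <;>
            simp [Set.indicator_of_mem, Set.indicator_of_notMem, hx]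
        rw [this, integral_indicator_const ‖c‖ hs, smul_eq_mul, measureReal_def]
      rw [hΨval, hrhs]
      calc (inner ℝ (∑ i, c i • g i) (A χ) : ℝ) ≤ ‖∑ i, c i • g i‖ * ‖A χ‖ :=
            real_inner_le_norm _ _
        _ ≤ ‖c‖ * (‖A‖ * ‖χ‖) := by
            apply mul_le_mul (hg c) (A.le_opNorm χ) (norm_nonneg _) (norm_nonneg _)
        _ = ‖A‖ * ((μ s).toReal * ‖c‖) := by rw [hχnorm]; ring
    · -- additivity
      intro u1 u2 hdisj hi1 hi2 hP1 hP2 hu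
      have hm1 : MemLp u1 1 μ := memLp_one_iff_integrable.mpr hi1
      have hm2 : MemLp u2 1 μ := memLp_one_iff_integrable.mpr hi2
      have htoLp : hu.toLp (u1 + u2) = hm1.toLp u1 + hm2.toLp u2 := by
        rw [← MemLp.toLp_add hm1 hm2]
      have hΨadd : Ψ (hm1.toLp u1 + hm2.toLp u2) = Ψ (hm1.toLp u1) + Ψ (hm2.toLp u2) := by
        rw [hΨ]
        simp only [map_add, inner_add_right]
        rw [← Finset.sum_add_distrib]
      have hnorm : ∫ x, ‖(u1 + u2) x‖ ∂μ = (∫ x, ‖u1 x‖ ∂μ) + ∫ x, ‖u2 x‖ ∂μ := by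
        rw [← integral_add hi1.norm hi2.norm]
        apply integral_congr_ae
        apply Filter.Eventually.of_forall
        intro x
        by_cases h1 : u1 x = 0
        · simp [h1]
        · have h2 : u2 x = 0 := by
            by_contra h2
            exact Set.disjoint_left.mp hdisj (Function.mem_support.mpr h1)
              (Function.mem_support.mpr h2)
          simp [h2]
      rw [htoLp, hΨadd, hnorm, mul_add]
      exact add_le_add (hP1 hm1) (hP2 hm2)
    · -- closedness
      have hset : {G : Lp (EuclideanSpace ℝ κ) 1 μ |
          ∀ hu : MemLp (⇑G) 1 μ, Ψ (hu.toLp ⇑G) ≤ ‖A‖ * ∫ x, ‖G x‖ ∂μ}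
          = {G | Ψ G ≤ ‖A‖ * ‖G‖} := by
        ext G
        have h2 : ∫ x, ‖G x‖ ∂μ = ‖G‖ := (L1.norm_eq_integral_norm G).symm
        constructor
        · intro hG
          have := hG (Lp.memLp G)
          rwa [Lp.toLp_coeFn G (Lp.memLp G), h2] at this
        · intro hG hu
          rwa [Lp.toLp_coeFn G hu, h2]
      show IsClosed {G : Lp (EuclideanSpace ℝ κ) 1 μ |
          ∀ hu : MemLp (⇑G) 1 μ, Ψ (hu.toLp ⇑G) ≤ ‖A‖ * ∫ x, ‖G x‖ ∂μ}
      rw [hset]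
      exact isClosed_le hΨcont (continuous_const.mul continuous_norm)
    · -- a.e. invariance
      intro u1 u2 heq hi1 hP1 hu2
      have hu1 : MemLp u1 1 μ := memLp_one_iff_integrable.mpr hi1
      have ht : hu2.toLp u2 = hu1.toLp u1 := (MemLp.toLp_congr hu1 hu2 heq).symm
      have hint : ∫ x, ‖u2 x‖ ∂μ = ∫ x, ‖u1 x‖ ∂μ :=
        integral_congr_ae (heq.symm.fun_comp norm)
      rw [ht, hint]
      exact hP1 hu1
  have hvm : MemLp v 1 μ := memLp_one_iff_integrable.mpr hv
  have hmain := hP hv hvm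
  have hcompv : ∀ i, (EuclideanSpace.proj (𝕜 := ℝ) i).compLpL 1 μ (hvm.toLp v) = w i := by
    intro i
    apply Lp.ext
    filter_upwards [ContinuousLinearMap.coeFn_compLpL (EuclideanSpace.proj (𝕜 := ℝ) i) (hvm.toLp v),
      hvm.coeFn_toLp, hw i] with x h1 h2 h3
    rw [h1, h2, h3]
    rfl
  have : Ψ (hvm.toLp v) = ∑ i, (inner ℝ (g i) (A (w i)) : ℝ) := by
    rw [hΨ]
    exact Finset.sum_congr rfl fun i _ => by rw [hcompv i]
  linarith [hmain, this.symm.le, this.le]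

set_option maxHeartbeats 2000000 in
/-- Little Grothendieck theorem, trace-class case: if `A : L¹(ℝ^ν) → L²(ℝ^ν)` is
bounded, `B : L²(ℝ^ν) → L¹(ℝ^ν)` is bounded and positivity preserving, and `B` is
dominated by a fixed `φ ∈ L¹` on the unit ball, then `A ∘ B` is trace class on `L²`
with trace norm at most `‖A‖ ‖φ‖_{L¹}` (trace norm characterized as the supremum
over pairs of Hilbert bases of `∑ |⟨f i, (A∘B)(e i)⟩|`). -/
theorem composition_traceClass
    (ν : ℕ)
    (A : Lp ℝ 1 (volume : Measure (EuclideanSpace ℝ (Fin ν))) →L[ℝ]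
          Lp ℝ 2 (volume : Measure (EuclideanSpace ℝ (Fin ν))))
    (B : Lp ℝ 2 (volume : Measure (EuclideanSpace ℝ (Fin ν))) →L[ℝ]
          Lp ℝ 1 (volume : Measure (EuclideanSpace ℝ (Fin ν))))
    (hBpos : ∀ u : Lp ℝ 2 (volume : Measure (EuclideanSpace ℝ (Fin ν))),
      0 ≤ᵐ[volume] (u : EuclideanSpace ℝ (Fin ν) → ℝ) →
      0 ≤ᵐ[volume] (B u : EuclideanSpace ℝ (Fin ν) → ℝ))
    (φ : EuclideanSpace ℝ (Fin ν) → ℝ) (hφ : Integrable φ)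
    (hdom : ∀ u : Lp ℝ 2 (volume : Measure (EuclideanSpace ℝ (Fin ν))),
      ‖u‖ ≤ 1 → ∀ᵐ x ∂(volume : Measure (EuclideanSpace ℝ (Fin ν))),
        |(B u : EuclideanSpace ℝ (Fin ν) → ℝ) x| ≤ φ x) :
    ∀ (ι : Type)
      (e f : HilbertBasis ι ℝ
        (Lp ℝ 2 (volume : Measure (EuclideanSpace ℝ (Fin ν))))),
      Summable (fun i => |(inner ℝ (f i) ((A.comp B) (e i)) : ℝ)|) ∧
      (∑' i, |(inner ℝ (f i) ((A.comp B) (e i)) : ℝ)|) ≤ ‖A‖ * ∫ x, |φ x| := by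
  intro ι e f
  classical
  set t : ι → ℝ := fun i => (inner ℝ (f i) (A (B (e i))) : ℝ) with ht
  have hgoal_eq : (fun i => |(inner ℝ (f i) ((A.comp B) (e i)) : ℝ)|) = fun i => |t i| := by
    funext i
    rw [ht, ContinuousLinearMap.comp_apply]
  have key : ∀ S : Finset ι, ∑ i ∈ S, |t i| ≤ ‖A‖ * ∫ x, |φ x| := by
    intro S
    set σ : ι → ℝ := fun i => if 0 ≤ t i then 1 else -1 with hσ
    have hσsq : ∀ i, σ i * σ i = 1 := by
      intro i; rw [hσ]; by_cases h : 0 ≤ t i <;> simp [h]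
    have hσt : ∀ i, σ i * t i = |t i| := by
      intro i; rw [hσ]
      by_cases h : 0 ≤ t i
      · simp [h, abs_of_nonneg h]
      · push_neg at h
        simp [not_le.mpr h, abs_of_neg h]
    set g : ↥S → Lp ℝ 2 (volume : Measure (EuclideanSpace ℝ (Fin ν))) :=
      fun i => σ i.1 • f i.1 with hgdef
    have honf : Orthonormal ℝ (fun i : ↥S => f i.1) :=
      f.orthonormal.comp _ Subtype.val_injective
    have hone : Orthonormal ℝ (fun i : ↥S => e i.1) :=
      e.orthonormal.comp _ Subtype.val_injective
    have hnormsq : ∀ (c : EuclideanSpace ℝ ↥S), ‖c‖ ^ 2 = ∑ i : ↥S, (c i) ^ 2 := by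
      intro c
      rw [← real_inner_self_eq_norm_sq]
      simp only [PiLp.inner_apply, RCLike.inner_apply, conj_trivial, sq]
    have hg : ∀ c : EuclideanSpace ℝ ↥S, ‖∑ i, c i • g i‖ ≤ ‖c‖ := by
      intro c
      have h1 : ∑ i, c i • g i = ∑ i : ↥S, (c i * σ i.1) • f i.1 := by
        refine Finset.sum_congr rfl fun i _ => ?_
        rw [hgdef, smul_smul]
      have h2 : ‖∑ i : ↥S, (c i * σ i.1) • f i.1‖ ^ 2 = ∑ i : ↥S, (c i * σ i.1) ^ 2 := by
        rw [← real_inner_self_eq_norm_sq]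
        have := honf.inner_sum (fun i => c i * σ i.1) (fun i => c i * σ i.1) Finset.univ
        simp only [conj_trivial] at this
        rw [this]
        exact Finset.sum_congr rfl fun i _ => (sq _).symm
      have h3 : ∑ i : ↥S, (c i * σ i.1) ^ 2 = ‖c‖ ^ 2 := by
        rw [hnormsq c]
        refine Finset.sum_congr rfl fun i _ => ?_
        have := hσsq i.1
        nlinarith [hσsq i.1]
      rw [h1]
      nlinarith [norm_nonneg (∑ i : ↥S, (c i * σ i.1) • f i.1), norm_nonneg c, h2, h3]
    set w : ↥S → Lp ℝ 1 (volume : Measure (EuclideanSpace ℝ (Fin ν))) :=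
      fun i => B (e i.1) with hwdef
    set v : EuclideanSpace ℝ (Fin ν) → EuclideanSpace ℝ ↥S :=
      fun x => ∑ i : ↥S, ((w i : EuclideanSpace ℝ (Fin ν) → ℝ) x) • EuclideanSpace.single i (1:ℝ)
      with hvdef
    have hvapp : ∀ x (i : ↥S), v x i = (w i : EuclideanSpace ℝ (Fin ν) → ℝ) x := by
      intro x i
      rw [hvdef]
      have hsum : (∑ j : ↥S, ((w j : EuclideanSpace ℝ (Fin ν) → ℝ) x) •
          EuclideanSpace.single j (1:ℝ)) i
          = ∑ j : ↥S, (((w j : EuclideanSpace ℝ (Fin ν) → ℝ) x) •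
            EuclideanSpace.single j (1:ℝ)) i := by
        induction (Finset.univ : Finset ↥S) using Finset.induction_on with
        | empty => simp [PiLp.zero_apply]
        | insert a s hni ih =>
          rw [Finset.sum_insert hni, Finset.sum_insert hni, PiLp.add_apply, ih]
      beta_reduce
      rw [hsum]
      simp [PiLp.smul_apply, EuclideanSpace.single_apply]
    have hv : Integrable v (volume : Measure (EuclideanSpace ℝ (Fin ν))) := by
      rw [hvdef]
      apply integrable_finset_sum
      intro i _
      exact (L1.integrable_coeFn (w i)).smul_const _
    have hwae : ∀ i : ↥S, ((w i : EuclideanSpace ℝ (Fin ν) → ℝ))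
        =ᵐ[(volume : Measure (EuclideanSpace ℝ (Fin ν)))] fun x => v x i :=
      fun i => Filter.Eventually.of_forall fun x => (hvapp x i).symm
    -- Bessel-type bound
    have hq_ae : ∀ q : ↥S → ℚ, ∀ᵐ x ∂(volume : Measure (EuclideanSpace ℝ (Fin ν))),
        (‖ratVec q‖ ≤ 1 → (inner ℝ (ratVec q) (v x) : ℝ) ≤ φ x) := by
      intro q
      by_cases hq1 : ‖ratVec q‖ ≤ 1
      · set u : Lp ℝ 2 (volume : Measure (EuclideanSpace ℝ (Fin ν))) :=
          ∑ i : ↥S, ((q i : ℝ)) • e i.1 with hu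
        have hun : ‖u‖ ≤ 1 := by
          have h2 : ‖u‖ ^ 2 = ∑ i : ↥S, (q i : ℝ) ^ 2 := by
            rw [hu, ← real_inner_self_eq_norm_sq]
            have := hone.inner_sum (fun i => (q i : ℝ)) (fun i => (q i : ℝ)) Finset.univ
            simp only [conj_trivial] at this
            rw [this]
            exact Finset.sum_congr rfl fun i _ => (sq _).symm
          have h3 : ‖ratVec q‖ ^ 2 = ∑ i : ↥S, (q i : ℝ) ^ 2 := by
            rw [hnormsq]
            exact Finset.sum_congr rfl fun i _ => by rw [ratVec_apply]
          nlinarith [norm_nonneg u, norm_nonneg (ratVec q)]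
        have hdomu := hdom u hun
        have hcoeffs : ∀ᵐ x ∂(volume : Measure (EuclideanSpace ℝ (Fin ν))),
            ∀ i : ↥S, ((((q i : ℝ)) • w i : Lp ℝ 1 _) : EuclideanSpace ℝ (Fin ν) → ℝ) x
              = (q i : ℝ) * ((w i : EuclideanSpace ℝ (Fin ν) → ℝ) x) := by
          rw [MeasureTheory.ae_all_iff]
          intro i
          filter_upwards [Lp.coeFn_smul ((q i : ℝ)) (w i)] with x hx
          rw [hx]
          simp
        have hBu : ((B u : Lp ℝ 1 _) : EuclideanSpace ℝ (Fin ν) → ℝ)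
            =ᵐ[(volume : Measure (EuclideanSpace ℝ (Fin ν)))]
            fun x => ∑ i : ↥S, (q i : ℝ) * ((w i : EuclideanSpace ℝ (Fin ν) → ℝ) x) := by
          have h1 : B u = ∑ i : ↥S, ((q i : ℝ)) • w i := by
            rw [hu, map_sum]
            exact Finset.sum_congr rfl fun i _ => (B.map_smul _ _)
          rw [h1]
          filter_upwards [lp_coeFn_finset_sum Finset.univ
            (fun i : ↥S => ((q i : ℝ)) • w i), hcoeffs] with x hx1 hx2
          rw [hx1]
          exact Finset.sum_congr rfl fun i _ => hx2 i
        filter_upwards [hdomu, hBu] with x h1 h2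
        intro _
        have hinner : (inner ℝ (ratVec q) (v x) : ℝ)
            = ∑ i : ↥S, (q i : ℝ) * ((w i : EuclideanSpace ℝ (Fin ν) → ℝ) x) := by
          rw [PiLp.inner_apply]
          refine Finset.sum_congr rfl fun i _ => ?_
          rw [RCLike.inner_apply, conj_trivial, ratVec_apply, hvapp, mul_comm]
        rw [hinner, ← h2]
        exact le_trans (le_abs_self _) h1
      · filter_upwards with x
        intro h
        exact absurd h hq1
    have hbessel : ∀ᵐ x ∂(volume : Measure (EuclideanSpace ℝ (Fin ν))), ‖v x‖ ≤ φ x := by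
      have hall := (MeasureTheory.ae_all_iff).mpr hq_ae
      filter_upwards [hall] with x hx
      exact norm_le_of_forall_rat (v x) (φ x) (fun q hq => hx q hq)
    have hkey := key_ineq A g hg v hv w hwae
    have hL : ∑ i : ↥S, (inner ℝ (g i) (A (w i)) : ℝ) = ∑ i ∈ S, |t i| := by
      have h1 : ∀ i : ↥S, (inner ℝ (g i) (A (w i)) : ℝ) = |t i.1| := by
        intro i
        rw [hgdef, hwdef, real_inner_smul_left, ← hσt i.1, ht]
      rw [Finset.sum_congr rfl fun i _ => h1 i]
      rw [Finset.univ_eq_attach]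
      exact Finset.sum_attach S fun i => |t i|
    have hint : ∫ x, ‖v x‖ ≤ ∫ x, |φ x| := by
      apply integral_mono_ae hv.norm hφ.abs
      filter_upwards [hbessel] with x hx
      exact hx.trans (le_abs_self _)
    calc ∑ i ∈ S, |t i| = ∑ i : ↥S, (inner ℝ (g i) (A (w i)) : ℝ) := hL.symm
      _ ≤ ‖A‖ * ∫ x, ‖v x‖ := hkey
      _ ≤ ‖A‖ * ∫ x, |φ x| := mul_le_mul_of_nonneg_left hint (norm_nonneg A)
  have hsumm : Summable (fun i => |t i|) := summable_of_sum_le (fun i => abs_nonneg _) key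
  constructor
  · rw [hgoal_eq]
    exact hsumm
  · rw [hgoal_eq]
    exact Summable.tsum_le_of_sum_le hsumm key
end

section
/- Let g : ℝ → ℝ be C¹ with compact support, and set g̃(x) = g(−log x) for x > 0, g̃(0) = 0. Suppose (P_k) is a sequence of polynomials with P_k(0) = P_k'(0) = 0 such that sup_x |g̃(x) − P_k(x)| → 0, sup_x |g̃'(x) − P_k'(x)| → 0, and sup_x |g̃''(x) − P_k''(x)| → 0 on a compact interval [0, X]. Then sup_{x ∈ (0, X]} |g̃(x) − P_k(x)| / x → 0 as k → ∞. -/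
open Filter

theorem polynomial_approx_div_x_tendsto_zero
    (g : ℝ → ℝ) (hg : ContDiff ℝ 1 g) (hsupp : HasCompactSupport g)
    (X : ℝ) (hX : 0 < X)
    (gt : ℝ → ℝ) (hgt : ∀ x, gt x = if 0 < x then g (-Real.log x) else 0)
    (P : ℕ → Polynomial ℝ)
    (hP0 : ∀ k, (P k).eval 0 = 0)
    (hP'0 : ∀ k, ((P k).derivative).eval 0 = 0)
    (h0 : Tendsto (fun k => ⨆ x : Set.Icc (0 : ℝ) X,
        |gt x - (P k).eval (x : ℝ)|) atTop (nhds 0))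
    (h1 : Tendsto (fun k => ⨆ x : Set.Icc (0 : ℝ) X,
        |deriv gt x - ((P k).derivative).eval (x : ℝ)|) atTop (nhds 0))
    (h2 : Tendsto (fun k => ⨆ x : Set.Icc (0 : ℝ) X,
        |deriv (deriv gt) x - ((P k).derivative.derivative).eval (x : ℝ)|)
      atTop (nhds 0)) :
    Tendsto (fun k => ⨆ x : Set.Ioc (0 : ℝ) X,
        |gt x - (P k).eval (x : ℝ)| / (x : ℝ))
      atTop (nhds 0) := by
  -- bound for g
  obtain ⟨Cg, hCg⟩ := hsupp.exists_bound_of_continuous hg.continuous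
  -- radius of support
  obtain ⟨r, hr⟩ := hsupp.isCompact.isBounded.subset_closedBall 0
  set M : ℝ := max r 0 with hM
  have hgz : ∀ y : ℝ, M < |y| → g y = 0 := by
    intro y hy
    apply image_eq_zero_of_notMem_tsupport
    intro hmem
    have := hr hmem
    rw [Metric.mem_closedBall, Real.dist_eq, sub_zero] at this
    exact absurd this (not_le.mpr (lt_of_le_of_lt (le_max_left r 0) hy))
  set x₀ : ℝ := min (Real.exp (-(M + 1))) X with hx₀def
  have hx₀pos : 0 < x₀ := lt_min (Real.exp_pos _) hX
  have hx₀X : x₀ ≤ X := min_le_right _ _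
  -- gt vanishes on (-∞, x₀]
  have hgt0 : ∀ x : ℝ, x ≤ x₀ → gt x = 0 := by
    intro x hx
    rw [hgt x]
    split_ifs with hxp
    · apply hgz
      have hxe : x ≤ Real.exp (-(M + 1)) := hx.trans (min_le_left _ _)
      have hlog : Real.log x ≤ -(M + 1) := by
        calc Real.log x ≤ Real.log (Real.exp (-(M + 1))) :=
              Real.log_le_log hxp hxe
          _ = -(M + 1) := Real.log_exp _
      have h1 : M + 1 ≤ -Real.log x := by linarith
      have hM0 : (0:ℝ) ≤ M := le_max_right r 0
      rw [abs_of_nonneg (by linarith)]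
      linarith
    · rfl
  -- deriv gt vanishes on (-∞, x₀)
  have hderiv0 : ∀ x : ℝ, x < x₀ → deriv gt x = 0 := by
    intro x hx
    have hev : gt =ᶠ[nhds x] (fun _ => (0:ℝ)) :=
      Filter.eventuallyEq_of_mem (Iio_mem_nhds hx) (fun y hy => hgt0 y (le_of_lt hy))
    rw [hev.deriv_eq, deriv_const]
  -- formula for deriv gt on (0, ∞)
  have hderivpos : ∀ x : ℝ, 0 < x → deriv gt x = deriv g (-Real.log x) * (-x⁻¹) := by
    intro x hx
    have hev : gt =ᶠ[nhds x] (fun y => g (-Real.log y)) := by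
      apply Filter.eventuallyEq_of_mem (Ioi_mem_nhds hx)
      intro y hy
      rw [hgt y, if_pos (show (0:ℝ) < y from hy)]
    rw [hev.deriv_eq]
    have hlog : HasDerivAt (fun y : ℝ => -Real.log y) (-x⁻¹) x :=
      (Real.hasDerivAt_log (ne_of_gt hx)).neg
    have hgd : HasDerivAt g (deriv g (-Real.log x)) (-Real.log x) :=
      ((hg.differentiable one_ne_zero) (-Real.log x)).hasDerivAt
    exact (hgd.comp x hlog).deriv
  -- bound for deriv g
  obtain ⟨Cg', hCg'⟩ := (hsupp.deriv).exists_bound_of_continuous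
    (hg.continuous_deriv le_rfl)
  -- bound for deriv gt on [0, X]
  have hderivbdd : ∀ x : ℝ, x ∈ Set.Icc (0:ℝ) X → |deriv gt x| ≤ |Cg'| / x₀ := by
    intro x hxmem
    rcases lt_or_ge x x₀ with h | h
    · rw [hderiv0 x h, abs_zero]
      positivity
    · have hxp : 0 < x := lt_of_lt_of_le hx₀pos h
      rw [hderivpos x hxp, abs_mul, abs_neg, abs_inv, abs_of_pos hxp]
      apply div_le_div₀ (by positivity)
        ((hCg' _).trans (le_abs_self _)) hx₀pos h
  -- nonemptiness
  haveI : Nonempty (Set.Icc (0:ℝ) X) := ⟨⟨0, le_refl _, le_of_lt hX⟩⟩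
  haveI : Nonempty (Set.Ioc (0:ℝ) X) := ⟨⟨X, hX, le_refl _⟩⟩
  set S0 : ℕ → ℝ := fun k => ⨆ x : Set.Icc (0:ℝ) X, |gt x - (P k).eval (x:ℝ)| with hS0
  set S1 : ℕ → ℝ := fun k =>
    ⨆ x : Set.Icc (0:ℝ) X, |deriv gt x - ((P k).derivative).eval (x:ℝ)| with hS1
  -- BddAbove for S0 and S1
  have hbdd0 : ∀ k, BddAbove (Set.range
      (fun x : Set.Icc (0:ℝ) X => |gt (x:ℝ) - (P k).eval (x:ℝ)|)) := by
    intro k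
    obtain ⟨Cp, hCp⟩ := IsCompact.exists_bound_of_continuousOn (isCompact_Icc (a := (0:ℝ)) (b := X))
      ((P k).continuous_aeval.continuousOn)
    refine ⟨max Cg 0 + Cp, ?_⟩
    rintro y ⟨x, rfl⟩
    have h1 : |gt (x:ℝ)| ≤ max Cg 0 := by
      rw [hgt (x:ℝ)]
      split_ifs with h
      · exact (hCg _).trans (le_max_left _ _)
      · simp
    have h2 : |(P k).eval (x:ℝ)| ≤ Cp := by
      have := hCp (x:ℝ) x.2
      simpa using this
    calc |gt (x:ℝ) - (P k).eval (x:ℝ)| ≤ |gt (x:ℝ)| + |(P k).eval (x:ℝ)| := abs_sub _ _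
      _ ≤ max Cg 0 + Cp := add_le_add h1 h2
  have hbdd1 : ∀ k, BddAbove (Set.range
      (fun x : Set.Icc (0:ℝ) X => |deriv gt (x:ℝ) - ((P k).derivative).eval (x:ℝ)|)) := by
    intro k
    obtain ⟨Cp, hCp⟩ := IsCompact.exists_bound_of_continuousOn (isCompact_Icc (a := (0:ℝ)) (b := X))
      (((P k).derivative).continuous_aeval.continuousOn)
    refine ⟨|Cg'| / x₀ + Cp, ?_⟩
    rintro y ⟨x, rfl⟩
    have h2 : |((P k).derivative).eval (x:ℝ)| ≤ Cp := by
      have := hCp (x:ℝ) x.2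
      simpa using this
    calc |deriv gt (x:ℝ) - ((P k).derivative).eval (x:ℝ)|
        ≤ |deriv gt (x:ℝ)| + |((P k).derivative).eval (x:ℝ)| := abs_sub _ _
      _ ≤ |Cg'| / x₀ + Cp := add_le_add (hderivbdd _ x.2) h2
  have hS0nonneg : ∀ k, 0 ≤ S0 k := fun k => Real.iSup_nonneg (fun x => abs_nonneg _)
  have hS1nonneg : ∀ k, 0 ≤ S1 k := fun k => Real.iSup_nonneg (fun x => abs_nonneg _)
  -- squeeze
  have hlower : ∀ k, (0:ℝ) ≤ ⨆ x : Set.Ioc (0:ℝ) X, |gt x - (P k).eval (x:ℝ)| / (x:ℝ) :=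
    fun k => Real.iSup_nonneg (fun x => div_nonneg (abs_nonneg _) (le_of_lt x.2.1))
  have hupper : ∀ k, (⨆ x : Set.Ioc (0:ℝ) X, |gt x - (P k).eval (x:ℝ)| / (x:ℝ))
      ≤ S1 k + S0 k / x₀ := by
    intro k
    apply Real.iSup_le _ (add_nonneg (hS1nonneg k) (div_nonneg (hS0nonneg k) hx₀pos.le))
    rintro ⟨x, hx1, hx2⟩
    simp only
    rcases le_or_gt x x₀ with h | h
    · -- near 0 : use MVT
      have hgtx : gt x = 0 := hgt0 x h
      rw [hgtx, zero_sub, abs_neg]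
      obtain ⟨c, hc, hceq⟩ := exists_hasDerivAt_eq_slope (fun y => (P k).eval y)
        (fun y => ((P k).derivative).eval y) hx1
        ((P k).continuous_aeval.continuousOn)
        (fun y _ => (P k).hasDerivAt y)
      have hval : |(P k).eval x| / x = |((P k).derivative).eval c| := by
        rw [hceq, hP0 k, sub_zero, sub_zero, abs_div, abs_of_pos hx1]
      rw [hval]
      have hc0 : deriv gt c = 0 := hderiv0 c (lt_of_lt_of_le hc.2 h)
      have hcmem : c ∈ Set.Icc (0:ℝ) X :=
        ⟨le_of_lt hc.1, le_of_lt (lt_of_lt_of_le hc.2 (hx2.trans (le_refl _)))⟩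
      have hle : |((P k).derivative).eval c| ≤ S1 k := by
        have h' := le_ciSup (hbdd1 k) (⟨c, hcmem⟩ : Set.Icc (0:ℝ) X)
        simp only [hc0, zero_sub, abs_neg] at h'
        exact h'
      exact hle.trans (le_add_of_nonneg_right (div_nonneg (hS0nonneg k) hx₀pos.le))
    · -- away from 0
      have hle : |gt x - (P k).eval x| ≤ S0 k :=
        le_ciSup (hbdd0 k) (⟨x, le_of_lt hx1, hx2⟩ : Set.Icc (0:ℝ) X)
      have : |gt x - (P k).eval x| / x ≤ S0 k / x₀ :=
        div_le_div₀ (hS0nonneg k) hle hx₀pos (le_of_lt h)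
      exact this.trans (le_add_of_nonneg_left (hS1nonneg k))
  have hTend : Tendsto (fun k => S1 k + S0 k / x₀) atTop (nhds 0) := by
    have := h1.add (h0.div_const x₀)
    simpa using this
  exact tendsto_of_tendsto_of_tendsto_of_le_of_le tendsto_const_nhds hTend hlower hupper
end
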